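/- Let K be a positive definite 3×3 matrix with p_ij ≥ 0 for all 0 ≤ i < j ≤ 3 (where p_ij = -κ_ij and p_0i = Σ_j κ_ij), satisfying p01p23 = p02p13 ≤ p03p12. Then Σ = K^{-1} can be written as Σ = Σ_θ for the 3-leaf tree with clade {1,2} with all parameters θ1,...,θ5 nonnegative, i.e., σ13 = σ23, σ12 ≥ σ13 ≥ 0, σ11 ≥ σ12, σ22 ≥ σ12, σ33 ≥ σ13. -/

import Mathlib

set_option maxHeartbeats 2000000 in
private theorem stmt_5_aux (K : Matrix (Fin 3) (Fin 3) ℝ) (hK : K.PosDef)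
    (p01 p02 p03 p12 p13 p23 : ℝ)
    (hp01 : p01 = K 0 0 + K 0 1 + K 0 2)
    (hp02 : p02 = K 1 0 + K 1 1 + K 1 2)
    (hp03 : p03 = K 2 0 + K 2 1 + K 2 2)
    (hp12 : p12 = -(K 0 1)) (hp13 : p13 = -(K 0 2)) (hp23 : p23 = -(K 1 2))
    (hn01 : 0 ≤ p01) (hn02 : 0 ≤ p02) (hn03 : 0 ≤ p03)
    (hn12 : 0 ≤ p12) (hn13 : 0 ≤ p13) (hn23 : 0 ≤ p23)
    (heq : p01 * p23 = p02 * p13) (hle : p02 * p13 ≤ p03 * p12)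
    (S : Matrix (Fin 3) (Fin 3) ℝ) (hS : S = K⁻¹) :
    S 0 2 = S 1 2 ∧ S 0 2 ≤ S 0 1 ∧ 0 ≤ S 0 2 ∧
      S 0 1 ≤ S 0 0 ∧ S 0 1 ≤ S 1 1 ∧ S 0 2 ≤ S 2 2 := by
  -- symmetry of K
  have h10 : K 1 0 = K 0 1 := by symm; simpa using hK.1.apply 1 0
  have h20 : K 2 0 = K 0 2 := by symm; simpa using hK.1.apply 2 0
  have h21 : K 2 1 = K 1 2 := by symm; simpa using hK.1.apply 2 1
  -- positivity of diagonal entries via the quadratic form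
  have quad : ∀ x y z : ℝ, ¬(x = 0 ∧ y = 0 ∧ z = 0) →
      0 < K 0 0 * x * x + K 1 1 * y * y + K 2 2 * z * z +
        2 * K 0 1 * x * y + 2 * K 0 2 * x * z + 2 * K 1 2 * y * z := by
    intro x y z h
    have h2 := hK.dotProduct_mulVec_pos (x := ![x, y, z]) (by
      intro hz
      exact h ⟨congrFun hz 0, congrFun hz 1, congrFun hz 2⟩)
    simp [dotProduct, Matrix.mulVec, Fin.sum_univ_three, h10, h20, h21] at h2
    nlinarith [h2]
  have hda : 0 < K 0 0 := by have := quad 1 0 0 (by norm_num); linarith [this]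
  have hdd : 0 < K 1 1 := by have := quad 0 1 0 (by norm_num); linarith [this]
  have hdf : 0 < K 2 2 := by have := quad 0 0 1 (by norm_num); linarith [this]
  -- rewrite hypotheses in terms of upper-triangular entries
  rw [hp01] at hn01
  rw [hp02, h10] at hn02
  rw [hp03, h20, h21] at hn03
  rw [hp12] at hn12
  rw [hp13] at hn13
  rw [hp23] at hn23
  rw [hp01, hp02, hp13, hp23, h10] at heq
  rw [hp02, hp03, hp12, hp13, h10, h20, h21] at hle
  -- entries of S via the adjugate
  have hdet : 0 < K.det := hK.det_pos
  have hdinv : 0 ≤ K.det⁻¹ := le_of_lt (inv_pos.mpr hdet)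
  have hS' : ∀ i j, S i j = K.det⁻¹ * K.adjugate i j := by
    intro i j
    rw [hS, Matrix.inv_def]
    simp [Ring.inverse_eq_inv']
  have e02 := hS' 0 2; rw [Matrix.adjugate_fin_three] at e02; simp at e02
  have e12 := hS' 1 2; rw [Matrix.adjugate_fin_three] at e12; simp at e12
  have e01 := hS' 0 1; rw [Matrix.adjugate_fin_three] at e01; simp at e01
  have e00 := hS' 0 0; rw [Matrix.adjugate_fin_three] at e00; simp at e00
  have e11 := hS' 1 1; rw [Matrix.adjugate_fin_three] at e11; simp at e11
  have e22 := hS' 2 2; rw [Matrix.adjugate_fin_three] at e22; simp at e22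
  rw [h10] at e12 e22
  rw [h20] at e11
  rw [h21] at e01 e00
  refine ⟨?_, ?_, ?_, ?_, ?_, ?_⟩
  · rw [e02, e12]
    have : K 0 1 * K 1 2 - K 0 2 * K 1 1 = -(K 0 0 * K 1 2) + K 0 2 * K 0 1 := by
      nlinarith [heq]
    rw [this]
  · rw [e02, e01]
    have : K 0 1 * K 1 2 - K 0 2 * K 1 1 ≤ -(K 0 1 * K 2 2) + K 0 2 * K 1 2 := by
      nlinarith [hle]
    exact mul_le_mul_of_nonneg_left this hdinv
  · rw [e02]
    have h1 : 0 ≤ -(K 0 1) * -(K 1 2) := mul_nonneg hn12 hn23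
    have h2 : 0 ≤ -(K 0 2) * K 1 1 := mul_nonneg hn13 hdd.le
    have : 0 ≤ K 0 1 * K 1 2 - K 0 2 * K 1 1 := by nlinarith
    exact mul_nonneg hdinv this
  · rw [e01, e00]
    have h1 : 0 ≤ K 2 2 * (K 0 1 + K 1 1 + K 1 2) := mul_nonneg hdf.le hn02
    have h2 : 0 ≤ -(K 1 2) * (K 0 2 + K 1 2 + K 2 2) := mul_nonneg hn23 hn03
    have : -(K 0 1 * K 2 2) + K 0 2 * K 1 2 ≤ K 1 1 * K 2 2 - K 1 2 * K 1 2 := by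
      nlinarith
    exact mul_le_mul_of_nonneg_left this hdinv
  · rw [e01, e11]
    have h1 : 0 ≤ K 2 2 * (K 0 0 + K 0 1 + K 0 2) := mul_nonneg hdf.le hn01
    have h2 : 0 ≤ -(K 0 2) * (K 0 2 + K 1 2 + K 2 2) := mul_nonneg hn13 hn03
    have : -(K 0 1 * K 2 2) + K 0 2 * K 1 2 ≤ K 0 0 * K 2 2 - K 0 2 * K 0 2 := by
      nlinarith
    exact mul_le_mul_of_nonneg_left this hdinv
  · rw [e02, e22]
    have h1 : 0 ≤ K 1 1 * (K 0 0 + K 0 1 + K 0 2) := mul_nonneg hdd.le hn01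
    have h2 : 0 ≤ -(K 0 1) * (K 0 1 + K 1 1 + K 1 2) := mul_nonneg hn12 hn02
    have : K 0 1 * K 1 2 - K 0 2 * K 1 1 ≤ K 0 0 * K 1 1 - K 0 1 * K 0 1 := by
      nlinarith
    exact mul_le_mul_of_nonneg_left this hdinv

theorem stmt_5 (K : Matrix (Fin 3) (Fin 3) ℝ) (hK : K.PosDef)
    (p01 p02 p03 p12 p13 p23 : ℝ)
    (hp01 : p01 = K 0 0 + K 0 1 + K 0 2)
    (hp02 : p02 = K 1 0 + K 1 1 + K 1 2)
    (hp03 : p03 = K 2 0 + K 2 1 + K 2 2)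
    (hp12 : p12 = -(K 0 1)) (hp13 : p13 = -(K 0 2)) (hp23 : p23 = -(K 1 2))
    (hn01 : 0 ≤ p01) (hn02 : 0 ≤ p02) (hn03 : 0 ≤ p03)
    (hn12 : 0 ≤ p12) (hn13 : 0 ≤ p13) (hn23 : 0 ≤ p23)
    (heq : p01 * p23 = p02 * p13) (hle : p02 * p13 ≤ p03 * p12)
    (S : Matrix (Fin 3) (Fin 3) ℝ) (hS : S = K⁻¹) :
    S 0 2 = S 1 2 ∧ S 0 2 ≤ S 0 1 ∧ 0 ≤ S 0 2 ∧
      S 0 1 ≤ S 0 0 ∧ S 0 1 ≤ S 1 1 ∧ S 0 2 ≤ S 2 2 :=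
  stmt_5_aux K hK p01 p02 p03 p12 p13 p23 hp01 hp02 hp03 hp12 hp13 hp23
    hn01 hn02 hn03 hn12 hn13 hn23 heq hle S hS
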